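/- Let ε ∈ (0, 0.1) and r > 0, and let A, B ∈ ℝ^{n×n} be symmetric positive semidefinite matrices. Assume that -r ≤ A_{i,j} ≤ r for all (i,j) ∈ [n]×[n], and that (1-ε)B ⪯ A ⪯ (1+ε)B in the Loewner order (i.e. A - (1-ε)B and (1+ε)B - A are positive semidefinite). Then every entry of B satisfies B_{i,j} ∈ [-(1+2ε)r, (1+2ε)r]. -/

import Mathlib

open Matrix

lemma psd_quad_pair {n : ℕ} (M : Matrix (Fin n) (Fin n) ℝ) (hM : M.PosSemidef)
    (i j : Fin n) (c : ℝ) :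
    0 ≤ M i i + c * M i j + c * M j i + c * c * M j j := by
  have h := hM.dotProduct_mulVec_nonneg (Pi.single i 1 + Pi.single j c)
  simp only [star_trivial, mulVec_add, mulVec_single, dotProduct_add, add_dotProduct,
    single_dotProduct, Pi.add_apply, Pi.smul_apply, op_smul_eq_mul, col_apply] at h
  linarith [h]

theorem entries_of_loewner_perturbed_psd {n : ℕ} (ε r : ℝ)
    (hε : ε ∈ Set.Ioo (0 : ℝ) 0.1) (hr : 0 < r)
    (A B : Matrix (Fin n) (Fin n) ℝ)
    (hA : A.PosSemidef) (hB : B.PosSemidef)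
    (hAr : ∀ i j, -r ≤ A i j ∧ A i j ≤ r)
    (hlow : (A - (1 - ε) • B).PosSemidef)
    (hupp : ((1 + ε) • B - A).PosSemidef) :
    ∀ i j, -((1 + 2 * ε) * r) ≤ B i j ∧ B i j ≤ (1 + 2 * ε) * r := by
  obtain ⟨hε0, hε1⟩ := hε
  norm_num at hε1
  intro i j
  have hsym : B j i = B i j := by
    have := hB.1
    rw [Matrix.IsHermitian] at this
    calc B j i = Bᵀ i j := rfl
    _ = B i j := by rw [← Matrix.conjTranspose_eq_transpose_of_trivial, this]
  -- diagonal bounds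
  have hdi : 0 ≤ (A - (1 - ε) • B) i i := by
    simpa using psd_quad_pair _ hlow i i 0
  have hdj : 0 ≤ (A - (1 - ε) • B) j j := by
    simpa using psd_quad_pair _ hlow j j 0
  simp only [Matrix.sub_apply, Matrix.smul_apply, smul_eq_mul] at hdi hdj
  have hAi := hAr i i
  have hAj := hAr j j
  have hBi : (1 - ε) * B i i ≤ r := by linarith [hAi.2]
  have hBj : (1 - ε) * B j j ≤ r := by linarith [hAj.2]
  have hplus := psd_quad_pair B hB i j 1
  have hminus := psd_quad_pair B hB i j (-1)
  rw [hsym] at hplus hminus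
  -- 2 B i j ≤ B i i + B j j and -2 B i j ≤ B i i + B j j
  have key : (1 - ε) * (2 * B i j) ≤ 2 * r ∧ (1 - ε) * (-(2 * B i j)) ≤ 2 * r := by
    constructor <;> nlinarith [mul_nonneg (by linarith : (0:ℝ) ≤ 1 - ε) hminus,
      mul_nonneg (by linarith : (0:ℝ) ≤ 1 - ε) hplus]
  have hr' : r ≤ (1 + 2 * ε) * (1 - ε) * r := by nlinarith [mul_pos hε0 hr, mul_nonneg (mul_nonneg hε0.le hε0.le) hr.le, mul_nonneg hε0.le hr.le]
  constructor <;> nlinarith [key.1, key.2, hr']
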